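/- The function F : S²×S² → ℝ, F(p,q) = ⟨p,q⟩ (the Euclidean inner product in ℝ³), satisfies |∇F|² = 2(1 - F²) and ΔF = -4F with respect to the product metric on S²×S². In particular F is an isoparametric function. -/

import Mathlib

set_option maxHeartbeats 1600000

open scoped RealInnerProductSpace

/-- The geodesic of the unit sphere `S² ⊂ ℝ³` starting at `p` with initial velocity `v`
(tangent to the sphere at `p`). -/
noncomputable def sphGeo (p v : EuclideanSpace ℝ (Fin 3)) (t : ℝ) : EuclideanSpace ℝ (Fin 3) :=
  Real.cos (‖v‖ * t) • p + (Real.sin (‖v‖ * t) / ‖v‖) • v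

/-! ### Auxiliary lemmas -/

/-- The basic trigonometric polynomial appearing in `⟪sphGeo p v s, sphGeo q w s⟫`. -/
noncomputable def trigP (a b A B C D : ℝ) : ℝ → ℝ := fun s =>
  A * (Real.cos (a*s) * Real.cos (b*s)) + B * (Real.cos (a*s) * Real.sin (b*s))
  + C * (Real.sin (a*s) * Real.cos (b*s)) + D * (Real.sin (a*s) * Real.sin (b*s))

lemma trigP_hasDerivAt (a b A B C D s : ℝ) :
    HasDerivAt (trigP a b A B C D) (trigP a b (B*b + C*a) (-A*b + D*a) (-A*a + D*b) (-B*a - C*b) s) s := by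
  have ha : HasDerivAt (fun t : ℝ => a * t) a s := by simpa using (hasDerivAt_id s).const_mul a
  have hb : HasDerivAt (fun t : ℝ => b * t) b s := by simpa using (hasDerivAt_id s).const_mul b
  have h := ((((ha.cos.mul hb.cos).const_mul A).add ((ha.cos.mul hb.sin).const_mul B)).add
    ((ha.sin.mul hb.cos).const_mul C)).add ((ha.sin.mul hb.sin).const_mul D)
  convert h using 1
  · rfl
  · rfl
  · rfl
  simp [trigP]
  ring

lemma trigP_second_deriv (a b A B C D : ℝ) :
    deriv (deriv (trigP a b A B C D)) 0 = -(a^2 + b^2) * A + 2*a*b*D := by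
  have h1 : deriv (trigP a b A B C D) = trigP a b (B*b + C*a) (-A*b + D*a) (-A*a + D*b) (-B*a - C*b) := by
    funext s; exact (trigP_hasDerivAt a b A B C D s).deriv
  rw [h1, (trigP_hasDerivAt a b _ _ _ _ 0).deriv]
  simp [trigP]
  ring

/-- The second derivative at `0` of the inner product of two sphere geodesics. -/
lemma geo_second (p q v w : EuclideanSpace ℝ (Fin 3)) :
    deriv (deriv (fun s => ⟪sphGeo p v s, sphGeo q w s⟫)) 0
      = -(‖v‖^2 + ‖w‖^2) * ⟪p, q⟫ + 2 * ⟪v, w⟫ := by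
  have hfun : (fun s => ⟪sphGeo p v s, sphGeo q w s⟫)
      = trigP ‖v‖ ‖w‖ ⟪p, q⟫ (⟪p, w⟫ / ‖w‖) (⟪v, q⟫ / ‖v‖) (⟪v, w⟫ / (‖v‖ * ‖w‖)) := by
    funext s
    simp only [sphGeo, trigP, inner_add_left, inner_add_right, real_inner_smul_left,
      real_inner_smul_right]
    ring
  rw [hfun, trigP_second_deriv]
  by_cases hv : ‖v‖ = 0
  · have hv0 : v = 0 := norm_eq_zero.mp hv
    simp [hv, hv0]
  by_cases hw : ‖w‖ = 0
  · have hw0 : w = 0 := norm_eq_zero.mp hw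
    simp [hw, hw0]
  field_simp

lemma inner3 (x y : EuclideanSpace ℝ (Fin 3)) : ⟪x, y⟫ = x 0 * y 0 + x 1 * y 1 + x 2 * y 2 := by
  simp [PiLp.inner_apply, RCLike.inner_apply, Fin.sum_univ_three, mul_comm]

noncomputable def vec6 (x y : EuclideanSpace ℝ (Fin 3)) : Fin 6 → ℝ :=
  ![x 0, x 1, x 2, y 0, y 1, y 2]
@[simp] lemma vec6_0 (x y : EuclideanSpace ℝ (Fin 3)) : vec6 x y 0 = x 0 := rfl
@[simp] lemma vec6_1 (x y : EuclideanSpace ℝ (Fin 3)) : vec6 x y 1 = x 1 := rfl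
@[simp] lemma vec6_2 (x y : EuclideanSpace ℝ (Fin 3)) : vec6 x y 2 = x 2 := rfl
@[simp] lemma vec6_3 (x y : EuclideanSpace ℝ (Fin 3)) : vec6 x y 3 = y 0 := rfl
@[simp] lemma vec6_4 (x y : EuclideanSpace ℝ (Fin 3)) : vec6 x y 4 = y 1 := rfl
@[simp] lemma vec6_5 (x y : EuclideanSpace ℝ (Fin 3)) : vec6 x y 5 = y 2 := rfl

/-- For an orthonormal tangent frame of `S²×S²` at `(p,q)`, the mixed traces vanish:
`∑ ⟪vᵢ, wᵢ⟫ = 0`. -/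
lemma frame_sum_zero (p q : EuclideanSpace ℝ (Fin 3)) (hp : ‖p‖ = 1) (hq : ‖q‖ = 1)
    (e : Fin 4 → EuclideanSpace ℝ (Fin 3) × EuclideanSpace ℝ (Fin 3))
    (h1 : ∀ i, ⟪(e i).1, p⟫ = 0 ∧ ⟪(e i).2, q⟫ = 0)
    (h2 : ∀ i j, ⟪(e i).1, (e j).1⟫ + ⟪(e i).2, (e j).2⟫ = if i = j then 1 else 0) :
    ∑ i, ⟪(e i).1, (e i).2⟫ = 0 := by
  have hpp : ⟪p, p⟫ = 1 := by rw [real_inner_self_eq_norm_sq, hp]; norm_num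
  have hqq : ⟪q, q⟫ = 1 := by rw [real_inner_self_eq_norm_sq, hq]; norm_num
  set M : Matrix (Fin 6) (Fin 6) ℝ := Matrix.of
    ![vec6 (e 0).1 (e 0).2, vec6 (e 1).1 (e 1).2, vec6 (e 2).1 (e 2).2,
      vec6 (e 3).1 (e 3).2, vec6 p 0, vec6 0 q] with hM
  have Hp := inner3 p p ▸ hpp
  have Hq := inner3 q q ▸ hqq
  have H2 : ∀ i j : Fin 4, ((e i).1 0 * (e j).1 0 + (e i).1 1 * (e j).1 1 + (e i).1 2 * (e j).1 2)
      + ((e i).2 0 * (e j).2 0 + (e i).2 1 * (e j).2 1 + (e i).2 2 * (e j).2 2)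
      = if i = j then 1 else 0 := by
    intro i j; rw [← inner3, ← inner3]; exact h2 i j
  have H1a : ∀ i : Fin 4, (e i).1 0 * p 0 + (e i).1 1 * p 1 + (e i).1 2 * p 2 = 0 := by
    intro i; rw [← inner3]; exact (h1 i).1
  have H1b : ∀ i : Fin 4, (e i).2 0 * q 0 + (e i).2 1 * q 1 + (e i).2 2 * q 2 = 0 := by
    intro i; rw [← inner3]; exact (h1 i).2
  have D : ∀ i : Fin 4, ((e i).1 0 * (e i).1 0 + (e i).1 1 * (e i).1 1 + (e i).1 2 * (e i).1 2)
      + ((e i).2 0 * (e i).2 0 + (e i).2 1 * (e i).2 1 + (e i).2 2 * (e i).2 2) = 1 := by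
    intro i; simpa using H2 i i
  have O : ∀ i j : Fin 4, i ≠ j →
      ((e i).1 0 * (e j).1 0 + (e i).1 1 * (e j).1 1 + (e i).1 2 * (e j).1 2)
      + ((e i).2 0 * (e j).2 0 + (e i).2 1 * (e j).2 1 + (e i).2 2 * (e j).2 2) = 0 := by
    intro i j h; simpa [h] using H2 i j
  have r0 : M 0 = vec6 (e 0).1 (e 0).2 := rfl
  have r1 : M 1 = vec6 (e 1).1 (e 1).2 := rfl
  have r2 : M 2 = vec6 (e 2).1 (e 2).2 := rfl
  have r3 : M 3 = vec6 (e 3).1 (e 3).2 := rfl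
  have r4 : M 4 = vec6 p 0 := rfl
  have r5 : M 5 = vec6 0 q := rfl
  have hrow : M * M.transpose = 1 := by
    ext i j
    fin_cases i <;> fin_cases j <;>
      simp [Matrix.mul_apply, Matrix.transpose_apply, Fin.sum_univ_six,
        Matrix.one_apply, r0, r1, r2, r3, r4, r5] <;>
      linarith [D 0, D 1, D 2, D 3,
        O 0 1 (by decide), O 0 2 (by decide), O 0 3 (by decide),
        O 1 0 (by decide), O 1 2 (by decide), O 1 3 (by decide),
        O 2 0 (by decide), O 2 1 (by decide), O 2 3 (by decide),
        O 3 0 (by decide), O 3 1 (by decide), O 3 2 (by decide),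
        H1a 0, H1a 1, H1a 2, H1a 3, H1b 0, H1b 1, H1b 2, H1b 3, Hp, Hq]
  have hcol : M.transpose * M = 1 := mul_eq_one_comm.mp hrow
  have c0 := congrFun (congrFun hcol 0) 3
  have c1 := congrFun (congrFun hcol 1) 4
  have c2 := congrFun (congrFun hcol 2) 5
  simp [Matrix.mul_apply, Matrix.transpose_apply, Fin.sum_univ_six,
    Matrix.one_apply, r0, r1, r2, r3, r4, r5] at c0 c1 c2
  rw [Fin.sum_univ_four]
  simp only [inner3]
  linarith [c0, c1, c2]

/-- Part 1: the gradient identity. -/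
lemma grad_part (p q : EuclideanSpace ℝ (Fin 3)) (hp : ‖p‖ = 1) (hq : ‖q‖ = 1)
    (g₁ g₂ : EuclideanSpace ℝ (Fin 3)) (hg₁ : ⟪g₁, p⟫ = 0) (hg₂ : ⟪g₂, q⟫ = 0)
    (H : ∀ v w : EuclideanSpace ℝ (Fin 3), ⟪v, p⟫ = 0 → ⟪w, q⟫ = 0 →
        ⟪g₁, v⟫ + ⟪g₂, w⟫ = ⟪q, v⟫ + ⟪p, w⟫) :
    ‖g₁‖ ^ 2 + ‖g₂‖ ^ 2 = 2 * (1 - ⟪p, q⟫ ^ 2) := by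
  have hpp : ⟪p, p⟫ = 1 := by
    rw [real_inner_self_eq_norm_sq, hp]; norm_num
  have hqq : ⟪q, q⟫ = 1 := by
    rw [real_inner_self_eq_norm_sq, hq]; norm_num
  have key : ∀ (g x y : EuclideanSpace ℝ (Fin 3)), ⟪g, x⟫ = 0 → ⟪x, x⟫ = 1 →
      (∀ v : EuclideanSpace ℝ (Fin 3), ⟪v, x⟫ = 0 → ⟪g, v⟫ = ⟪y, v⟫) →
      g = y - ⟪x, y⟫ • x := by
    intro g x y hg hx Hv
    set d : ℝ := ⟪x, y⟫ with hd
    set u : EuclideanSpace ℝ (Fin 3) := g - (y - d • x) with hu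
    have hux : ⟪u, x⟫ = 0 := by
      rw [hu, inner_sub_left, inner_sub_left, real_inner_smul_left, hg, hx,
        real_inner_comm x y, ← hd]
      ring
    have hgu := Hv u hux
    have hzero : ⟪u, u⟫ = 0 := by
      have hexp : ⟪u, u⟫ = ⟪g, u⟫ - ⟪y, u⟫ + d * ⟪x, u⟫ := by
        rw [show ⟪u,u⟫ = ⟪g - (y - d • x), u⟫ from by rw [← hu], inner_sub_left,
          inner_sub_left, real_inner_smul_left]
        ring
      rw [hexp, real_inner_comm u x, hux, hgu]; ring
    have hu0 : u = 0 := inner_self_eq_zero.mp hzero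
    exact sub_eq_zero.mp (hu0 ▸ hu.symm)
  have h1 : g₁ = q - ⟪p, q⟫ • p := by
    refine key g₁ p q hg₁ hpp ?_
    intro v hv
    have := H v 0 hv (by simp)
    simpa using this
  have h2 : g₂ = p - ⟪q, p⟫ • q := by
    refine key g₂ q p hg₂ hqq ?_
    intro w hw
    have := H 0 w (by simp) hw
    simpa using this
  have n1 : ‖g₁‖ ^ 2 = 1 - ⟪p, q⟫ ^ 2 := by
    rw [← real_inner_self_eq_norm_sq, h1]
    simp only [inner_sub_left, inner_sub_right, real_inner_smul_left, real_inner_smul_right,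
      hpp, hqq]
    rw [real_inner_comm p q]
    ring
  have n2 : ‖g₂‖ ^ 2 = 1 - ⟪p, q⟫ ^ 2 := by
    rw [← real_inner_self_eq_norm_sq, h2]
    simp only [inner_sub_left, inner_sub_right, real_inner_smul_left, real_inner_smul_right,
      hpp, hqq]
    rw [real_inner_comm p q]
    ring
  rw [n1, n2]; ring

/-- The function `F(p,q) = ⟨p,q⟩` on `S²×S²` satisfies
`|∇F|² = 2(1 - F²)` (the Riemannian gradient being the tangent vector `g` characterized
by `⟨g, v⟩ = dF(v)` for all tangent vectors `v`, and `dF(v,w) = ⟨v,q⟩ + ⟨p,w⟩`) and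
`ΔF = -4F` (the Laplace–Beltrami operator computed as the sum of second derivatives of
`F` along geodesics in the directions of an orthonormal tangent frame).  In particular
`F` is an isoparametric function. -/
theorem stmt_2 (p q : EuclideanSpace ℝ (Fin 3)) (hp : ‖p‖ = 1) (hq : ‖q‖ = 1) :
    -- |∇F|² = 2(1 - F²) at (p,q):
    (∀ g₁ g₂ : EuclideanSpace ℝ (Fin 3), ⟪g₁, p⟫ = 0 → ⟪g₂, q⟫ = 0 →
      (∀ v w : EuclideanSpace ℝ (Fin 3), ⟪v, p⟫ = 0 → ⟪w, q⟫ = 0 →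
        ⟪g₁, v⟫ + ⟪g₂, w⟫ = ⟪q, v⟫ + ⟪p, w⟫) →
      ‖g₁‖ ^ 2 + ‖g₂‖ ^ 2 = 2 * (1 - ⟪p, q⟫ ^ 2)) ∧
    -- ΔF = -4F at (p,q):
    (∀ e : Fin 4 → EuclideanSpace ℝ (Fin 3) × EuclideanSpace ℝ (Fin 3),
      (∀ i, ⟪(e i).1, p⟫ = 0 ∧ ⟪(e i).2, q⟫ = 0) →
      (∀ i j, ⟪(e i).1, (e j).1⟫ + ⟪(e i).2, (e j).2⟫ = if i = j then 1 else 0) →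
      ∑ i, deriv (deriv (fun s => ⟪sphGeo p (e i).1 s, sphGeo q (e i).2 s⟫)) 0 = -4 * ⟪p, q⟫) := by
  constructor
  · intro g₁ g₂ hg₁ hg₂ H
    exact grad_part p q hp hq g₁ g₂ hg₁ hg₂ H
  · intro e h1 h2
    have hsum : ∑ i, deriv (deriv (fun s => ⟪sphGeo p (e i).1 s, sphGeo q (e i).2 s⟫)) 0
        = ∑ i, (-(‖(e i).1‖^2 + ‖(e i).2‖^2) * ⟪p, q⟫ + 2 * ⟪(e i).1, (e i).2⟫) :=
      Finset.sum_congr rfl (fun i _ => geo_second p q (e i).1 (e i).2)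
    rw [hsum]
    have ni : ∀ i : Fin 4, ‖(e i).1‖^2 + ‖(e i).2‖^2 = 1 := by
      intro i
      rw [← real_inner_self_eq_norm_sq, ← real_inner_self_eq_norm_sq]
      simpa using h2 i i
    have hz := frame_sum_zero p q hp hq e h1 h2
    rw [Fin.sum_univ_four] at hz ⊢
    linear_combination (-⟪p, q⟫) * (ni 0 + ni 1 + ni 2 + ni 3) + 2 * hz
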